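/- Let S, Q ⊂ ℝ be finite sets with |S| = |Q| = m ≥ 2. For a point p of such a set, let its row be the increasing list of the m−1 distances |q − p| over the other points q of the set. If the multiset of rows of points of S equals the multiset of rows of points of Q, then there is an isometry of ℝ (a map of the form x ↦ x + t or x ↦ −x + t) taking S onto Q. -/

import Mathlib

/-- The row of a point `p` of a finite set `S ⊂ ℝ`: the increasing list of the
distances `|q − p|` over the other points `q` of `S`. -/
noncomputable def row (S : Finset ℝ) (p : ℝ) : List ℝ :=
  Multiset.sort (((S.erase p).val).map fun q => |q - p|) (· ≤ ·)

lemma row_multiset_eq {S Q : Finset ℝ} {p q : ℝ} (h : row S p = row Q q) :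
    ((S.erase p).val).map (fun x => |x - p|) = ((Q.erase q).val).map (fun x => |x - q|) := by
  have := congrArg (fun l : List ℝ => (l : Multiset ℝ)) h
  simpa [row, Multiset.sort_eq] using this

/-- If `S, Q ⊂ ℝ` are finite sets of the same cardinality
`m ≥ 2` and the multiset of rows of points of `S` equals the multiset of rows
of points of `Q` (i.e. there is a bijection between the points identifying
their rows), then some isometry of `ℝ` (a map `x ↦ x + t` or `x ↦ −x + t`)
takes `S` onto `Q`. -/
theorem stmt_6 (m : ℕ) (hm : 2 ≤ m) (S Q : Finset ℝ)
    (hScard : S.card = m) (hQcard : Q.card = m)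
    (e : {x // x ∈ S} ≃ {x // x ∈ Q})
    (he : ∀ p : {x // x ∈ S}, row S (p : ℝ) = row Q ((e p : ℝ))) :
    ∃ t : ℝ, Q = S.image (fun x => x + t) ∨ Q = S.image (fun x => -x + t) := by
  have hS : S.Nonempty := Finset.card_pos.mp (by omega)
  have hQ : Q.Nonempty := Finset.card_pos.mp (by omega)
  set a := S.min' hS with ha
  set b := S.max' hS with hb
  set c := Q.min' hQ with hc
  set d := Q.max' hQ with hd
  have hab : a < b := S.min'_lt_max'_of_card (by omega)
  have hcd : c < d := Q.min'_lt_max'_of_card (by omega)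
  have keyS : ∀ x y : ℝ, x ∈ S → y ∈ S → |x - y| ≤ b - a := by
    intro x y hx hy
    rw [abs_sub_le_iff]
    constructor <;>
      nlinarith [S.min'_le x hx, S.le_max' x hx, S.min'_le y hy, S.le_max' y hy]
  have keyQ : ∀ x y : ℝ, x ∈ Q → y ∈ Q → |x - y| ≤ d - c := by
    intro x y hx hy
    rw [abs_sub_le_iff]
    constructor <;>
      nlinarith [Q.min'_le x hx, Q.le_max' x hx, Q.min'_le y hy, Q.le_max' y hy]
  have haS : a ∈ S := S.min'_mem hS
  set q0 : ℝ := (e ⟨a, haS⟩ : ℝ) with hq0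
  have hq0Q : q0 ∈ Q := (e ⟨a, haS⟩).2
  have hmain : ((S.erase a).val).map (fun x => |x - a|)
      = ((Q.erase q0).val).map (fun x => |x - q0|) := row_multiset_eq (he ⟨a, haS⟩)
  -- Step 1: d - c ≤ b - a
  have hcQ : c ∈ Q := Q.min'_mem hQ
  have hdcba : d - c ≤ b - a := by
    obtain ⟨p1, hp1⟩ : ∃ p1 : {x // x ∈ S}, e p1 = ⟨c, hcQ⟩ :=
      ⟨e.symm ⟨c, hcQ⟩, e.apply_symm_apply _⟩
    have h1 : ((S.erase (p1 : ℝ)).val).map (fun x => |x - (p1 : ℝ)|)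
        = ((Q.erase c).val).map (fun x => |x - c|) := by
      have := row_multiset_eq (he p1)
      rwa [hp1] at this
    have hdQc : d ∈ Q.erase c := Finset.mem_erase.mpr ⟨ne_of_gt hcd, Q.max'_mem hQ⟩
    have hmem : |d - c| ∈ ((Q.erase c).val).map (fun x => |x - c|) :=
      Multiset.mem_map_of_mem _ (Finset.mem_val.mpr hdQc)
    rw [← h1] at hmem
    obtain ⟨x, hx, hxeq⟩ := Multiset.mem_map.mp hmem
    have hxS : x ∈ S := Finset.mem_of_mem_erase (Finset.mem_val.mp hx)
    have := keyS x (p1 : ℝ) hxS p1.2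
    rw [hxeq, abs_of_nonneg (by linarith : (0:ℝ) ≤ d - c)] at this
    exact this
  -- Step 2: b - a ≤ d - c and q0 is an endpoint of Q
  have hbSa : b ∈ S.erase a := Finset.mem_erase.mpr ⟨ne_of_gt hab, S.max'_mem hS⟩
  have hmemb : |b - a| ∈ ((Q.erase q0).val).map (fun x => |x - q0|) := by
    rw [← hmain]
    exact Multiset.mem_map_of_mem _ (Finset.mem_val.mpr hbSa)
  obtain ⟨r, hr, hreq⟩ := Multiset.mem_map.mp hmemb
  have hrQ : r ∈ Q := Finset.mem_of_mem_erase (Finset.mem_val.mp hr)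
  rw [abs_of_nonneg (by linarith : (0:ℝ) ≤ b - a)] at hreq
  have hbadc : b - a ≤ d - c := hreq ▸ keyQ r q0 hrQ hq0Q
  have hdiam : b - a = d - c := le_antisymm hbadc hdcba
  have hq0le : q0 ≤ d := Q.le_max' q0 hq0Q
  have hq0ge : c ≤ q0 := Q.min'_le q0 hq0Q
  have hrled : r ≤ d := Q.le_max' r hrQ
  have hrgec : c ≤ r := Q.min'_le r hrQ
  have hend : q0 = c ∨ q0 = d := by
    rcases abs_cases (r - q0) with ⟨h, _⟩ | ⟨h, _⟩
    · left; rw [h] at hreq; linarith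
    · right; rw [h] at hreq; linarith
  -- helper: erase/cons decomposition
  have hSval : S.val = a ::ₘ (S.erase a).val := by
    rw [Finset.erase_val]
    exact (Multiset.cons_erase (Finset.mem_val.mpr haS)).symm
  rcases hend with h0 | h0
  · -- translation case
    refine ⟨c - a, Or.inl ?_⟩
    rw [h0] at hmain
    have hL : ((S.erase a).val).map (fun x => |x - a|) = ((S.erase a).val).map (fun x => x - a) := by
      apply Multiset.map_congr rfl
      intro x hx
      have hxS : x ∈ S := Finset.mem_of_mem_erase (Finset.mem_val.mp hx)
      exact abs_of_nonneg (by linarith [S.min'_le x hxS])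
    have hR : ((Q.erase c).val).map (fun x => |x - c|) = ((Q.erase c).val).map (fun x => x - c) := by
      apply Multiset.map_congr rfl
      intro x hx
      have hxQ : x ∈ Q := Finset.mem_of_mem_erase (Finset.mem_val.mp hx)
      exact abs_of_nonneg (by linarith [Q.min'_le x hxQ])
    rw [hL, hR] at hmain
    have h2 := congrArg (Multiset.map (fun y => y + c)) hmain
    rw [Multiset.map_map, Multiset.map_map] at h2
    have h3 : ((Q.erase c).val) = ((S.erase a).val).map (fun x => x + (c - a)) := by
      rw [← show Multiset.map ((fun y => y + c) ∘ fun x => x - c) (Q.erase c).val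
          = (Q.erase c).val by
        rw [show ((fun y => y + c) ∘ fun x : ℝ => x - c) = id by funext x; simp]
        exact Multiset.map_id _]
      rw [← h2]
      apply Multiset.map_congr rfl
      intro x _
      simp [Function.comp]; ring
    have hQval : Q.val = c ::ₘ (Q.erase c).val := by
      rw [Finset.erase_val]
      exact (Multiset.cons_erase (Finset.mem_val.mpr hcQ)).symm
    have hinj : Function.Injective (fun x : ℝ => x + (c - a)) := add_left_injective _
    rw [← Finset.val_inj, Finset.image_val,
      Multiset.dedup_eq_self.mpr (S.nodup.map hinj)]
    rw [hQval, hSval, Multiset.map_cons, h3]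
    congr 1
    ring
  · -- reflection case
    refine ⟨d + a, Or.inr ?_⟩
    rw [h0] at hmain
    have hdQ : d ∈ Q := Q.max'_mem hQ
    have hL : ((S.erase a).val).map (fun x => |x - a|) = ((S.erase a).val).map (fun x => x - a) := by
      apply Multiset.map_congr rfl
      intro x hx
      have hxS : x ∈ S := Finset.mem_of_mem_erase (Finset.mem_val.mp hx)
      exact abs_of_nonneg (by linarith [S.min'_le x hxS])
    have hR : ((Q.erase d).val).map (fun x => |x - d|) = ((Q.erase d).val).map (fun x => d - x) := by
      apply Multiset.map_congr rfl
      intro x hx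
      have hxQ : x ∈ Q := Finset.mem_of_mem_erase (Finset.mem_val.mp hx)
      rw [abs_sub_comm]
      exact abs_of_nonneg (by linarith [Q.le_max' x hxQ])
    rw [hL, hR] at hmain
    have h2 := congrArg (Multiset.map (fun y => d - y)) hmain
    rw [Multiset.map_map, Multiset.map_map] at h2
    have h3 : ((Q.erase d).val) = ((S.erase a).val).map (fun x => -x + (d + a)) := by
      rw [← show Multiset.map ((fun y => d - y) ∘ fun x => d - x) (Q.erase d).val
          = (Q.erase d).val by
        rw [show ((fun y => d - y) ∘ fun x : ℝ => d - x) = id by funext x; simp]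
        exact Multiset.map_id _]
      rw [← h2]
      apply Multiset.map_congr rfl
      intro x _
      simp [Function.comp]; ring
    have hQval : Q.val = d ::ₘ (Q.erase d).val := by
      rw [Finset.erase_val]
      exact (Multiset.cons_erase (Finset.mem_val.mpr hdQ)).symm
    have hinj : Function.Injective (fun x : ℝ => -x + (d + a)) := by
      intro x y hxy
      simp only at hxy
      linarith
    rw [← Finset.val_inj, Finset.image_val,
      Multiset.dedup_eq_self.mpr (S.nodup.map hinj)]
    rw [hQval, hSval, Multiset.map_cons, h3]
    congr 1
    ring
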